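/- Let $\sigma \in (5/3,2)$, $\alpha > 1$, and let $\Lambda:(0,1) \to \mathbb{R}$ be a measurable function satisfying $0 < \Lambda(z) \le z^{\sigma-2}$ for $z \in (0,1)$. Define $P_\alpha(\theta,\zeta) = \theta^\alpha \int_0^{1-\theta} \Lambda(z)\,(\zeta(1-z) - \theta)^{-\alpha}\,dz$ for $0 < \theta < 1 < \zeta$. Then there is a constant $C$ (depending on $\sigma$ and $\alpha$) such that $0 \le P_\alpha(\theta,\zeta) \le \frac{C\,\theta}{\zeta - \theta}\cdot \frac{(1-\theta)^{\sigma-1}}{(\zeta-1)^{\alpha-1}}$. -/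

import Mathlib

open MeasureTheory Set

set_option maxHeartbeats 1000000

/-- for `σ ∈ (5/3,2)`, `α > 1` and measurable `Λ` with
`0 < Λ(z) ≤ z^{σ-2}` on `(0,1)`, the function
`P_α(θ,ζ) = θ^α ∫_0^{1-θ} Λ(z) (ζ(1-z)-θ)^{-α} dz` satisfies
`0 ≤ P_α(θ,ζ) ≤ C θ/(ζ-θ) · (1-θ)^{σ-1}/(ζ-1)^{α-1}` for `0 < θ < 1 < ζ`. -/
theorem stmt9 (σ α : ℝ) (hσ : σ ∈ Ioo (5/3 : ℝ) 2) (hα : 1 < α)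
    (Λ : ℝ → ℝ) (hmeas : Measurable Λ)
    (hΛ : ∀ z ∈ Ioo (0:ℝ) 1, 0 < Λ z ∧ Λ z ≤ z ^ (σ - 2)) :
    ∃ C > (0:ℝ), ∀ θ ζ : ℝ, 0 < θ → θ < 1 → 1 < ζ →
      0 ≤ θ ^ α * ∫ z in (0:ℝ)..(1 - θ), Λ z * (ζ * (1 - z) - θ) ^ (-α) ∧
      θ ^ α * ∫ z in (0:ℝ)..(1 - θ), Λ z * (ζ * (1 - z) - θ) ^ (-α)
        ≤ C * θ / (ζ - θ) * ((1 - θ) ^ (σ - 1) / (ζ - 1) ^ (α - 1)) := by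
  obtain ⟨hσ1, hσ2⟩ := hσ
  have hσ1' : (1:ℝ) < σ := by linarith
  have hα0 : (0:ℝ) < α - 1 := by linarith
  have hs0 : (0:ℝ) < σ - 1 := by linarith
  have hCpos : (0:ℝ) < 2 ^ (α+1) / (σ-1) + 4/(α-1) := by
    have h2 : (0:ℝ) < (2:ℝ) ^ (α+1) := Real.rpow_pos_of_pos two_pos _
    positivity
  refine ⟨2 ^ (α+1) / (σ-1) + 4/(α-1), hCpos, fun θ ζ hθ hθ1 hζ => ?_⟩
  set C : ℝ := 2 ^ (α+1) / (σ-1) + 4/(α-1) with hCdef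
  clear_value C
  have h1θ : (0:ℝ) < 1 - θ := by linarith
  have hζθ : (0:ℝ) < ζ - θ := by linarith
  have hζ1 : (0:ℝ) < ζ - 1 := by linarith
  have hζ0 : (0:ℝ) < ζ := by linarith
  have hbase : ∀ z ∈ Icc (0:ℝ) (1-θ), 0 < ζ * (1 - z) - θ := by
    intro z hz
    nlinarith [mul_le_mul_of_nonneg_left hz.2 hζ0.le, hz.1]
  -- continuity of the kernel
  have hconth : ContinuousOn (fun z => (ζ * (1 - z) - θ) ^ (-α)) (Icc 0 (1-θ)) := by
    apply ContinuousOn.rpow_const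
    · fun_prop
    · intro z hz; exact Or.inl (hbase z hz).ne'
  have hmh : Measurable fun z => (ζ * (1 - z) - θ) ^ (-α) := by fun_prop
  -- integrability of the majorant
  have hint_g : IntervalIntegrable (fun z => z ^ (σ-2) * (ζ * (1 - z) - θ) ^ (-α))
      volume 0 (1-θ) := by
    apply (intervalIntegral.intervalIntegrable_rpow' (by linarith)).mul_continuousOn
    rw [uIcc_of_le h1θ.le]; exact hconth
  have hbase2 : ∀ z, z ≤ 1 - θ → 0 < ζ * (1 - z) - θ := by
    intro z hz
    nlinarith
  have hhnn : ∀ z, z ≤ 1 - θ → 0 ≤ (ζ * (1 - z) - θ) ^ (-α) := by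
    intro z hz
    exact (Real.rpow_pos_of_pos (hbase2 z hz) _).le
  -- integrability of the integrand
  have hint_f : IntervalIntegrable (fun z => Λ z * (ζ * (1 - z) - θ) ^ (-α))
      volume 0 (1-θ) := by
    rw [intervalIntegrable_iff_integrableOn_Ioc_of_le h1θ.le]
    have hg' : IntegrableOn (fun z => z ^ (σ-2) * (ζ * (1 - z) - θ) ^ (-α))
        (Ioc 0 (1-θ)) volume := by
      rw [← intervalIntegrable_iff_integrableOn_Ioc_of_le h1θ.le]; exact hint_g
    apply hg'.mono' ((hmeas.mul hmh).aestronglyMeasurable)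
    filter_upwards [ae_restrict_mem measurableSet_Ioc] with z hz
    have hz1 : z ∈ Ioo (0:ℝ) 1 := ⟨hz.1, lt_of_le_of_lt hz.2 (by linarith)⟩
    obtain ⟨hΛ0, hΛ2⟩ := hΛ z hz1
    rw [Real.norm_eq_abs]; simp only [Pi.mul_apply]; rw [abs_of_nonneg (mul_nonneg hΛ0.le (hhnn z hz.2))]
    exact mul_le_mul_of_nonneg_right hΛ2 (hhnn z hz.2)
  have hne : (∀ᵐ z : ℝ ∂volume, z ≠ 0) := by simp [ae_iff]
  -- nonnegativity
  have hnonneg : 0 ≤ ∫ z in (0:ℝ)..(1-θ), Λ z * (ζ * (1 - z) - θ) ^ (-α) := by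
    apply intervalIntegral.integral_nonneg_of_ae_restrict h1θ.le
    filter_upwards [ae_restrict_mem measurableSet_Icc, ae_restrict_of_ae hne] with z hz hz0
    have hz1 : z ∈ Ioo (0:ℝ) 1 := ⟨hz.1.lt_of_ne (Ne.symm hz0), lt_of_le_of_lt hz.2 (by linarith)⟩
    exact mul_nonneg (hΛ z hz1).1.le (hhnn z hz.2)
  -- step 1 : replace Λ by the power bound
  have step1 : (∫ z in (0:ℝ)..(1-θ), Λ z * (ζ * (1 - z) - θ) ^ (-α))
      ≤ ∫ z in (0:ℝ)..(1-θ), z ^ (σ-2) * (ζ * (1 - z) - θ) ^ (-α) := by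
    apply intervalIntegral.integral_mono_ae_restrict h1θ.le hint_f hint_g
    filter_upwards [ae_restrict_mem measurableSet_Icc, ae_restrict_of_ae hne] with z hz hz0
    have hz1 : z ∈ Ioo (0:ℝ) 1 := ⟨hz.1.lt_of_ne (Ne.symm hz0), lt_of_le_of_lt hz.2 (by linarith)⟩
    exact mul_le_mul_of_nonneg_right (hΛ z hz1).2 (hhnn z hz.2)
  set A : ℝ := (1-θ) ^ (σ-1) with hA
  clear_value A
  have hApos : 0 < A := by rw [hA]; exact Real.rpow_pos_of_pos h1θ _
  set T : ℝ := θ ^ (1-α) * (ζ-1) ^ (1-α) * A / (ζ-θ) with hT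
  clear_value T
  have hTpos : 0 < T := by
    rw [hT]
    have := Real.rpow_pos_of_pos hθ (1-α)
    have := Real.rpow_pos_of_pos hζ1 (1-α)
    positivity
  set c2 : ℝ := (ζ-θ) / (2*ζ) with hc2
  clear_value c2
  have hc2pos : 0 < c2 := by rw [hc2]; positivity
  have hc2ζ : ζ * c2 = (ζ-θ)/2 := by
    rw [hc2, mul_div_assoc', mul_comm 2 ζ, mul_div_mul_left _ _ hζ0.ne']
  -- pointwise bound on [0, c2]
  have hpt : ∀ z, z ≤ c2 → (ζ * (1 - z) - θ) ^ (-α) ≤ ((ζ-θ)/2) ^ (-α) := by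
    intro z hz
    apply Real.rpow_le_rpow_of_nonpos (by positivity) _ (by linarith)
    nlinarith [mul_le_mul_of_nonneg_left hz hζ0.le]
  have htwo : ((ζ-θ)/2 : ℝ) ^ (-α) = (ζ-θ) ^ (-α) * 2 ^ α := by
    rw [Real.div_rpow hζθ.le (by norm_num), Real.rpow_neg (by norm_num : (0:ℝ) ≤ 2),
      division_def, inv_inv]
  -- bound for the part near 0
  have boundA : ∀ b : ℝ, 0 < b → b ≤ 1-θ → b ≤ c2 →
      (∫ z in (0:ℝ)..b, z ^ (σ-2) * (ζ * (1 - z) - θ) ^ (-α))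
        ≤ 2 ^ α * ((ζ-θ) ^ (-α) * A) / (σ-1) := by
    intro b hb0 hb1 hbc
    have hib : IntervalIntegrable (fun z => z ^ (σ-2) * (ζ * (1 - z) - θ) ^ (-α))
        volume 0 b := by
      apply hint_g.mono_set
      rw [uIcc_of_le hb0.le, uIcc_of_le h1θ.le]
      exact Icc_subset_Icc le_rfl hb1
    calc (∫ z in (0:ℝ)..b, z ^ (σ-2) * (ζ * (1 - z) - θ) ^ (-α))
        ≤ ∫ z in (0:ℝ)..b, z ^ (σ-2) * ((ζ-θ)/2) ^ (-α) := by
          apply intervalIntegral.integral_mono_on hb0.le hib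
            ((intervalIntegral.intervalIntegrable_rpow' (by linarith)).mul_const _)
          intro z hz
          exact mul_le_mul_of_nonneg_left (hpt z (hz.2.trans hbc)) (Real.rpow_nonneg hz.1 _)
      _ = ((ζ-θ)/2) ^ (-α) * (b ^ (σ-1) / (σ-1)) := by
          rw [intervalIntegral.integral_mul_const, integral_rpow (Or.inl (by linarith))]
          rw [Real.zero_rpow (by linarith : σ - 2 + 1 ≠ 0)]
          rw [show σ - 2 + 1 = σ - 1 by ring]
          ring
      _ ≤ ((ζ-θ)/2) ^ (-α) * (A / (σ-1)) := by
          apply mul_le_mul_of_nonneg_left _ (Real.rpow_nonneg (by positivity) _)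
          apply div_le_div_of_nonneg_right _ hs0.le
          rw [hA]
          exact Real.rpow_le_rpow hb0.le hb1 hs0.le
      _ = 2 ^ α * ((ζ-θ) ^ (-α) * A) / (σ-1) := by rw [htwo]; ring
  -- the M-bound against T
  have hanti : (ζ-θ) ^ (1-α) ≤ θ ^ (1-α) * (ζ-1) ^ (1-α) := by
    rw [← Real.mul_rpow hθ.le hζ1.le]
    exact Real.rpow_le_rpow_of_nonpos (by positivity) (by nlinarith) (by linarith)
  have hsub : (ζ-θ) ^ (-α) = (ζ-θ) ^ (1-α) / (ζ-θ) := by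
    rw [show -α = (1-α) - 1 by ring, Real.rpow_sub hζθ, Real.rpow_one]
  have hMT : 2 ^ α * ((ζ-θ) ^ (-α) * A) / (σ-1) ≤ 2 ^ (α+1) / (σ-1) * T := by
    have h2α : (0:ℝ) < (2:ℝ) ^ α := Real.rpow_pos_of_pos two_pos _
    calc 2 ^ α * ((ζ-θ) ^ (-α) * A) / (σ-1)
        = 2 ^ α * ((ζ-θ) ^ (1-α) * A / (ζ-θ)) / (σ-1) := by rw [hsub]; ring
      _ ≤ 2 ^ α * (θ ^ (1-α) * (ζ-1) ^ (1-α) * A / (ζ-θ)) / (σ-1) := by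
          apply div_le_div_of_nonneg_right _ hs0.le
          apply mul_le_mul_of_nonneg_left _ h2α.le
          apply div_le_div_of_nonneg_right _ hζθ.le
          exact mul_le_mul_of_nonneg_right hanti hApos.le
      _ = 2 ^ α / (σ-1) * T := by rw [hT]; ring
      _ ≤ 2 ^ (α+1) / (σ-1) * T := by
          apply mul_le_mul_of_nonneg_right _ hTpos.le
          apply div_le_div_of_nonneg_right _ hs0.le
          exact Real.rpow_le_rpow_of_exponent_le one_le_two (by linarith)
  have hfinal_eq : θ ^ α * (C * T) = C * θ / (ζ - θ) * (A / (ζ - 1) ^ (α - 1)) := by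
    have h1 : θ ^ α * (θ ^ (α-1))⁻¹ = θ := by
      rw [← Real.rpow_neg hθ.le, ← Real.rpow_add hθ, show α + -(α-1) = 1 by ring,
        Real.rpow_one]
    have e : θ ^ α * (C * T)
        = C * (θ ^ α * (θ ^ (α-1))⁻¹) * ((ζ-1) ^ (α-1))⁻¹ * A / (ζ-θ) := by
      rw [hT, show (1:ℝ)-α = -(α-1) by ring, Real.rpow_neg hζ1.le, Real.rpow_neg hθ.le]
      ring
    rw [e, h1]
    ring
  -- main integral bound
  have hI2 : (∫ z in (0:ℝ)..(1-θ), z ^ (σ-2) * (ζ * (1 - z) - θ) ^ (-α)) ≤ C * T := by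
    rcases le_or_gt (1-θ) c2 with hcase | hcase
    · calc (∫ z in (0:ℝ)..(1-θ), z ^ (σ-2) * (ζ * (1 - z) - θ) ^ (-α))
          ≤ 2 ^ α * ((ζ-θ) ^ (-α) * A) / (σ-1) := boundA (1-θ) h1θ le_rfl hcase
        _ ≤ 2 ^ (α+1) / (σ-1) * T := hMT
        _ ≤ C * T := by
            rw [hCdef]
            have h4 : (0:ℝ) < 4/(α-1) := by positivity
            nlinarith [hTpos]
    · have hi1 : IntervalIntegrable (fun z => z ^ (σ-2) * (ζ * (1 - z) - θ) ^ (-α))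
          volume 0 c2 := by
        apply hint_g.mono_set
        rw [uIcc_of_le hc2pos.le, uIcc_of_le h1θ.le]
        exact Icc_subset_Icc le_rfl hcase.le
      have hi2 : IntervalIntegrable (fun z => z ^ (σ-2) * (ζ * (1 - z) - θ) ^ (-α))
          volume c2 (1-θ) := by
        apply hint_g.mono_set
        rw [uIcc_of_le hcase.le, uIcc_of_le h1θ.le]
        exact Icc_subset_Icc hc2pos.le le_rfl
      have hinth : IntervalIntegrable (fun z => (ζ * (1 - z) - θ) ^ (-α))
          volume c2 (1-θ) := by
        apply ContinuousOn.intervalIntegrable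
        apply hconth.mono
        rw [uIcc_of_le hcase.le]
        exact Icc_subset_Icc hc2pos.le le_rfl
      have hsplit : (∫ z in (0:ℝ)..(1-θ), z ^ (σ-2) * (ζ * (1 - z) - θ) ^ (-α))
          = (∫ z in (0:ℝ)..c2, z ^ (σ-2) * (ζ * (1 - z) - θ) ^ (-α))
            + ∫ z in c2..(1-θ), z ^ (σ-2) * (ζ * (1 - z) - θ) ^ (-α) :=
        (intervalIntegral.integral_add_adjacent_intervals hi1 hi2).symm
      have hders : ∀ z ∈ uIcc c2 (1-θ),
          HasDerivAt (fun z => (ζ * (1 - z) - θ) ^ (1-α) / (ζ*(α-1)))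
            ((ζ * (1 - z) - θ) ^ (-α)) z := by
        intro z hz
        rw [uIcc_of_le hcase.le] at hz
        have hbz : 0 < ζ * (1 - z) - θ := hbase2 z hz.2
        have hg : HasDerivAt (fun z => ζ * (1 - z) - θ) (-ζ) z := by
          simpa using (((hasDerivAt_id z).const_sub 1).const_mul ζ).sub_const θ
        have h2 := (hg.rpow_const (p := 1-α) (Or.inl hbz.ne')).div_const (ζ*(α-1))
        refine h2.congr_deriv ?_
        rw [show (1:ℝ)-α-1 = -α by ring]
        rw [div_eq_iff (mul_pos hζ0 hα0).ne']
        ring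
      have hJ := intervalIntegral.integral_eq_sub_of_hasDerivAt hders hinth
      simp only [show ζ * (1 - (1-θ)) - θ = θ*(ζ-1) from by ring,
        show ζ * (1 - c2) - θ = (ζ-θ)/2 from by field_simp [hc2]; linarith [hc2ζ]] at hJ
      have hJle : (∫ z in c2..(1-θ), (ζ * (1 - z) - θ) ^ (-α))
          ≤ (θ*(ζ-1)) ^ (1-α) / (ζ*(α-1)) := by
        rw [hJ]
        have h0 : (0:ℝ) ≤ ((ζ-θ)/2) ^ (1-α) / (ζ*(α-1)) := by
          have := Real.rpow_nonneg (by positivity : (0:ℝ) ≤ (ζ-θ)/2) (1-α)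
          positivity
        linarith
      have hpc2 : (∫ z in c2..(1-θ), z ^ (σ-2) * (ζ * (1 - z) - θ) ^ (-α))
          ≤ c2 ^ (σ-2) * ((θ*(ζ-1)) ^ (1-α) / (ζ*(α-1))) := by
        calc (∫ z in c2..(1-θ), z ^ (σ-2) * (ζ * (1 - z) - θ) ^ (-α))
            ≤ ∫ z in c2..(1-θ), c2 ^ (σ-2) * (ζ * (1 - z) - θ) ^ (-α) := by
              apply intervalIntegral.integral_mono_on hcase.le hi2 (hinth.const_mul _)
              intro z hz
              exact mul_le_mul_of_nonneg_right
                (Real.rpow_le_rpow_of_nonpos hc2pos hz.1 (by linarith)) (hhnn z hz.2)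
          _ = c2 ^ (σ-2) * ∫ z in c2..(1-θ), (ζ * (1 - z) - θ) ^ (-α) :=
              intervalIntegral.integral_const_mul _ _
          _ ≤ _ := mul_le_mul_of_nonneg_left hJle (Real.rpow_nonneg hc2pos.le _)
      have hpc2T : c2 ^ (σ-2) * ((θ*(ζ-1)) ^ (1-α) / (ζ*(α-1))) ≤ 4/(α-1) * T := by
        have hc2s : c2 ^ (σ-2) = c2 ^ (σ-1) / c2 := by
          rw [show σ-2 = (σ-1)-1 by ring, Real.rpow_sub hc2pos, Real.rpow_one]
        have hc2A : c2 ^ (σ-1) ≤ A := by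
          rw [hA]; exact Real.rpow_le_rpow hc2pos.le hcase.le hs0.le
        have hmulr : (θ*(ζ-1)) ^ (1-α) = θ ^ (1-α) * (ζ-1) ^ (1-α) :=
          Real.mul_rpow hθ.le hζ1.le
        have hnn : (0:ℝ) ≤ (θ*(ζ-1)) ^ (1-α) := Real.rpow_nonneg (by positivity) _
        calc c2 ^ (σ-2) * ((θ*(ζ-1)) ^ (1-α) / (ζ*(α-1)))
            = c2 ^ (σ-1) * ((θ*(ζ-1)) ^ (1-α)) / (c2*ζ*(α-1)) := by
              rw [hc2s]
              field_simp [hc2pos.ne', hζ0.ne', hα0.ne']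
          _ ≤ A * ((θ*(ζ-1)) ^ (1-α)) / (c2*ζ*(α-1)) := by
              apply div_le_div_of_nonneg_right _ (by positivity : (0:ℝ) ≤ c2*ζ*(α-1))
              exact mul_le_mul_of_nonneg_right hc2A hnn
          _ = 2/(α-1) * T := by
              rw [hmulr, hT, show c2*ζ = (ζ-θ)/2 from by rw [mul_comm]; exact hc2ζ]
              field_simp [hζθ.ne', hα0.ne']
          _ ≤ 4/(α-1) * T := by
              apply mul_le_mul_of_nonneg_right _ hTpos.le
              exact div_le_div_of_nonneg_right (by norm_num) hα0.le
      rw [hsplit]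
      calc (∫ z in (0:ℝ)..c2, z ^ (σ-2) * (ζ * (1 - z) - θ) ^ (-α))
            + ∫ z in c2..(1-θ), z ^ (σ-2) * (ζ * (1 - z) - θ) ^ (-α)
          ≤ 2 ^ α * ((ζ-θ) ^ (-α) * A) / (σ-1)
            + c2 ^ (σ-2) * ((θ*(ζ-1)) ^ (1-α) / (ζ*(α-1))) :=
            add_le_add (boundA c2 hc2pos hcase.le le_rfl) hpc2
        _ ≤ 2 ^ (α+1) / (σ-1) * T + 4/(α-1) * T := add_le_add hMT hpc2T
        _ = C * T := by rw [hCdef]; ring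
  have hθα : (0:ℝ) ≤ θ ^ α := (Real.rpow_pos_of_pos hθ _).le
  refine ⟨mul_nonneg hθα hnonneg, ?_⟩
  calc θ ^ α * ∫ z in (0:ℝ)..(1 - θ), Λ z * (ζ * (1 - z) - θ) ^ (-α)
      ≤ θ ^ α * ∫ z in (0:ℝ)..(1-θ), z ^ (σ-2) * (ζ * (1 - z) - θ) ^ (-α) :=
        mul_le_mul_of_nonneg_left step1 hθα
    _ ≤ θ ^ α * (C * T) := mul_le_mul_of_nonneg_left hI2 hθα
    _ = C * θ / (ζ - θ) * (A / (ζ - 1) ^ (α - 1)) := hfinal_eq
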